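/- arXiv:2307.11833 — 2 statements merged into one kernel-verified Lean document; each statement's English description precedes it below -/
import Mathlib

section
/- Let f : ℝ → ℝ be continuous and integrable with integrable Fourier transform. Then for every ε > 0 and every compact set K ⊆ ℝ, there exist a natural number N, frequencies ω₁, …, ω_N ∈ ℝ, and real coefficients c₁, …, c_N and s₁, …, s_N such that sup_{x ∈ K} |f(x) − ∑_{n=1}^N (c_n cos(ω_n x) + s_n sin(ω_n x))| < ε. -/
open MeasureTheory Real
open scoped BigOperators

section Aux

variable {K : Set ℝ}

/-- The cosine wave `x ↦ cos (ω x)` as a continuous map on `K`. -/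
noncomputable def cosMap (ω : ℝ) : C(K, ℝ) :=
  ⟨fun x => Real.cos (ω * (x : ℝ)), by continuity⟩

/-- The sine wave `x ↦ sin (ω x)` as a continuous map on `K`. -/
noncomputable def sinMap (ω : ℝ) : C(K, ℝ) :=
  ⟨fun x => Real.sin (ω * (x : ℝ)), by continuity⟩

/-- The set of basic waves. -/
def waveSet (K : Set ℝ) : Set C(K, ℝ) :=
  {g | ∃ ω : ℝ, g = cosMap ω ∨ g = sinMap ω}

lemma cos_mem (ω : ℝ) : (cosMap ω : C(K, ℝ)) ∈ Submodule.span ℝ (waveSet K) :=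
  Submodule.subset_span ⟨ω, Or.inl rfl⟩

lemma sin_mem (ω : ℝ) : (sinMap ω : C(K, ℝ)) ∈ Submodule.span ℝ (waveSet K) :=
  Submodule.subset_span ⟨ω, Or.inr rfl⟩

lemma wave_mul_mem (a b : C(K, ℝ)) (ha : a ∈ waveSet K) (hb : b ∈ waveSet K) :
    a * b ∈ Submodule.span ℝ (waveSet K) := by
  obtain ⟨ω₁, h₁⟩ := ha
  obtain ⟨ω₂, h₂⟩ := hb
  have key : ∀ (u v : C(K, ℝ)), u ∈ Submodule.span ℝ (waveSet K) →
      v ∈ Submodule.span ℝ (waveSet K) →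
      ((2 : ℝ)⁻¹ • u + (2 : ℝ)⁻¹ • v) ∈ Submodule.span ℝ (waveSet K) := fun u v hu hv =>
    Submodule.add_mem _ (Submodule.smul_mem _ _ hu) (Submodule.smul_mem _ _ hv)
  rcases h₁ with rfl | rfl <;> rcases h₂ with rfl | rfl
  · have : cosMap (K := K) ω₁ * cosMap ω₂ =
        (2 : ℝ)⁻¹ • cosMap (ω₁ + ω₂) + (2 : ℝ)⁻¹ • cosMap (ω₁ - ω₂) := by
      ext x
      simp only [ContinuousMap.mul_apply, ContinuousMap.add_apply, ContinuousMap.smul_apply,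
        cosMap, ContinuousMap.coe_mk, smul_eq_mul]
      rw [add_mul, sub_mul, Real.cos_add, Real.cos_sub]
      ring
    rw [this]; exact key _ _ (cos_mem _) (cos_mem _)
  · have : cosMap (K := K) ω₁ * sinMap ω₂ =
        (2 : ℝ)⁻¹ • sinMap (ω₁ + ω₂) + (2 : ℝ)⁻¹ • ((-1 : ℝ) • sinMap (ω₁ - ω₂)) := by
      ext x
      simp only [ContinuousMap.mul_apply, ContinuousMap.add_apply, ContinuousMap.smul_apply,
        cosMap, sinMap, ContinuousMap.coe_mk, smul_eq_mul]
      rw [add_mul, sub_mul, Real.sin_add, Real.sin_sub]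
      ring
    rw [this]
    exact key _ _ (sin_mem _) (Submodule.smul_mem _ _ (sin_mem _))
  · have : sinMap (K := K) ω₁ * cosMap ω₂ =
        (2 : ℝ)⁻¹ • sinMap (ω₁ + ω₂) + (2 : ℝ)⁻¹ • sinMap (ω₁ - ω₂) := by
      ext x
      simp only [ContinuousMap.mul_apply, ContinuousMap.add_apply, ContinuousMap.smul_apply,
        cosMap, sinMap, ContinuousMap.coe_mk, smul_eq_mul]
      rw [add_mul, sub_mul, Real.sin_add, Real.sin_sub]
      ring
    rw [this]; exact key _ _ (sin_mem _) (sin_mem _)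
  · have : sinMap (K := K) ω₁ * sinMap ω₂ =
        (2 : ℝ)⁻¹ • cosMap (ω₁ - ω₂) + (2 : ℝ)⁻¹ • ((-1 : ℝ) • cosMap (ω₁ + ω₂)) := by
      ext x
      simp only [ContinuousMap.mul_apply, ContinuousMap.add_apply, ContinuousMap.smul_apply,
        cosMap, sinMap, ContinuousMap.coe_mk, smul_eq_mul]
      rw [add_mul, sub_mul, Real.cos_add, Real.cos_sub]
      ring
    rw [this]
    exact key _ _ (cos_mem _) (Submodule.smul_mem _ _ (cos_mem _))

lemma span_mul_closed :
    ∀ a b : C(K, ℝ), a ∈ Submodule.span ℝ (waveSet K) → b ∈ Submodule.span ℝ (waveSet K) →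
      a * b ∈ Submodule.span ℝ (waveSet K) := by
  intro a b ha hb
  induction ha using Submodule.span_induction with
  | mem x hx =>
    induction hb using Submodule.span_induction with
    | mem y hy => exact wave_mul_mem _ _ hx hy
    | zero => simpa using Submodule.zero_mem _
    | add y z _ _ hy hz => rw [mul_add]; exact Submodule.add_mem _ hy hz
    | smul r y _ hy => rw [mul_smul_comm]; exact Submodule.smul_mem _ _ hy
  | zero => simpa using Submodule.zero_mem _
  | add x y _ _ hx hy => rw [add_mul]; exact Submodule.add_mem _ hx hy
  | smul r x _ hx => rw [smul_mul_assoc]; exact Submodule.smul_mem _ _ hx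

end Aux

/-- Quantitative conclusion of Proposition 1: a continuous integrable function with
integrable Fourier transform can be uniformly approximated on any compact set by a finite
sine–cosine sum (the output of a finite-width Wavelet-activated network). -/
theorem wavelet_riemann_sum_approximation
    (f : ℝ → ℝ) (hf : Continuous f) (hfi : Integrable f)
    (hFi : Integrable (fun ω : ℝ => ∫ t : ℝ, (f t : ℂ) * Complex.exp (-(Complex.I * ω * t))))
    (ε : ℝ) (hε : 0 < ε) (K : Set ℝ) (hK : IsCompact K) :
    ∃ (N : ℕ) (ω : Fin N → ℝ) (c s : Fin N → ℝ),
      ∀ x ∈ K,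
        |f x - ∑ n : Fin N, (c n * Real.cos (ω n * x) + s n * Real.sin (ω n * x))| < ε := by
  classical
  haveI : CompactSpace K := isCompact_iff_compactSpace.mp hK
  -- the subalgebra of finite sine–cosine sums
  have h_one : (1 : C(K, ℝ)) ∈ Submodule.span ℝ (waveSet K) := by
    have : (1 : C(K, ℝ)) = cosMap 0 := by
      ext x; simp [cosMap]
    rw [this]; exact cos_mem 0
  set A : Subalgebra ℝ C(K, ℝ) :=
    (Submodule.span ℝ (waveSet K)).toSubalgebra h_one span_mul_closed with hA
  -- A separates points
  have hsep : A.SeparatesPoints := by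
    intro x y hxy
    by_contra hcon
    push_neg at hcon
    have hsin : ∀ ω : ℝ, Real.sin (ω * (x : ℝ)) = Real.sin (ω * (y : ℝ)) := by
      intro ω
      have := hcon _ ⟨sinMap ω, sin_mem ω, rfl⟩
      simpa [sinMap] using this
    -- differentiate at ω = 0 to conclude x = y
    have hd1 : HasDerivAt (fun ω : ℝ => Real.sin (ω * (x : ℝ))) ((x : ℝ)) 0 := by
      have := (hasDerivAt_mul_const (x : ℝ)).sin (x := (0 : ℝ))
      simpa using this
    have hd2 : HasDerivAt (fun ω : ℝ => Real.sin (ω * (x : ℝ))) ((y : ℝ)) 0 := by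
      have h2 : HasDerivAt (fun ω : ℝ => Real.sin (ω * (y : ℝ))) ((y : ℝ)) 0 := by
        have := (hasDerivAt_mul_const (y : ℝ)).sin (x := (0 : ℝ))
        simpa using this
      have : (fun ω : ℝ => Real.sin (ω * (x : ℝ))) = fun ω => Real.sin (ω * (y : ℝ)) :=
        funext hsin
      rw [this]; exact h2
    have hxyval : (x : ℝ) = (y : ℝ) := hd1.unique hd2
    exact hxy (Subtype.ext hxyval)
  -- Stone–Weierstrass
  obtain ⟨⟨g, hg⟩, hgf⟩ :=
    ContinuousMap.exists_mem_subalgebra_near_continuous_of_separatesPoints A hsep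
      (fun x : K => f x) (hf.comp continuous_subtype_val) ε hε
  -- extract a finite linear combination
  rw [hA, Submodule.mem_toSubalgebra, Submodule.mem_span_set'] at hg
  obtain ⟨N, coef, w, hw⟩ := hg
  have hrep : ∀ i : Fin N, ∃ ω : ℝ,
      (w i : C(K, ℝ)) = cosMap ω ∨ (w i : C(K, ℝ)) = sinMap ω := fun i => (w i).2
  choose ω hω using hrep
  refine ⟨N, ω, fun i => if (w i : C(K, ℝ)) = cosMap (ω i) then coef i else 0,
    fun i => if (w i : C(K, ℝ)) = cosMap (ω i) then 0 else coef i, ?_⟩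
  intro x hx
  have hterm : ∀ i : Fin N,
      coef i • (w i : C(K, ℝ)) ⟨x, hx⟩ =
        (if (w i : C(K, ℝ)) = cosMap (ω i) then coef i else 0) * Real.cos (ω i * x) +
        (if (w i : C(K, ℝ)) = cosMap (ω i) then 0 else coef i) * Real.sin (ω i * x) := by
    intro i
    by_cases h : (w i : C(K, ℝ)) = cosMap (ω i)
    · rw [h]; simp [cosMap]
    · have hs : (w i : C(K, ℝ)) = sinMap (ω i) := (hω i).resolve_left h
      simp only [if_neg h]
      rw [hs]; simp [sinMap]
  have hval : g ⟨x, hx⟩ =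
      ∑ i : Fin N, ((if (w i : C(K, ℝ)) = cosMap (ω i) then coef i else 0) * Real.cos (ω i * x) +
        (if (w i : C(K, ℝ)) = cosMap (ω i) then 0 else coef i) * Real.sin (ω i * x)) := by
    rw [← hw]
    rw [← Finset.sum_congr rfl fun i _ => hterm i]
    simp
  have := hgf ⟨x, hx⟩
  rw [Real.norm_eq_abs] at this
  rw [← hval]
  calc |f x - g ⟨x, hx⟩| = |g ⟨x, hx⟩ - f x| := abs_sub_comm _ _
    _ < ε := this
end

section
/- Fix distinct points x₁, …, x_m in ℝ^d and target values y₁, …, y_m in ℝ. Then there exist a natural number N, frequency vectors w₁, …, w_N ∈ ℝ^d, and real coefficients a₁, …, a_N and b₁, …, b_N such that for every i, ∑_{j=1}^N (a_j sin(⟨w_j, x_i⟩) + b_j cos(⟨w_j, x_i⟩)) = y_i; that is, a finite-width two-hidden-layer network with the Wavelet activation can exactly interpolate any finite dataset. -/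
open scoped RealInnerProductSpace BigOperators

/-- A finite-width two-hidden-layer Wavelet-activated network (a finite sum of sines and
cosines of linear functionals) can exactly interpolate any finite dataset of distinct
points with arbitrary target values. -/
theorem wavelet_finite_interpolation
    (d m : ℕ) (x : Fin m → EuclideanSpace ℝ (Fin d)) (hx : Function.Injective x)
    (y : Fin m → ℝ) :
    ∃ (N : ℕ) (w : Fin N → EuclideanSpace ℝ (Fin d)) (a b : Fin N → ℝ),
      ∀ i : Fin m,
        ∑ j : Fin N, (a j * Real.sin ⟪w j, x i⟫ + b j * Real.cos ⟪w j, x i⟫) = y i := by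
  classical
  let E := EuclideanSpace ℝ (Fin d)
  let v : (E × Bool) → EuclideanSpace ℝ (Fin m) :=
    fun p => WithLp.toLp 2 (fun i => if p.2 then Real.sin ⟪p.1, x i⟫ else Real.cos ⟪p.1, x i⟫)
  -- Step 1: the span of the sine/cosine evaluation vectors is everything.
  have hspan : Submodule.span ℝ (Set.range v) = ⊤ := by
    by_contra h
    have hbot : (Submodule.span ℝ (Set.range v))ᗮ ≠ ⊥ := by
      intro hb
      exact h (Submodule.orthogonal_eq_bot_iff.mp hb)
    obtain ⟨c, hc, hc0⟩ := Submodule.exists_mem_ne_zero_of_ne_bot hbot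
    -- the two vanishing conditions
    have hzsin : ∀ w : E, ∑ i, Real.sin ⟪w, x i⟫ * c i = 0 := by
      intro w
      have := (Submodule.mem_orthogonal _ _).mp hc (v (w, true))
        (Submodule.subset_span ⟨(w, true), rfl⟩)
      simpa [PiLp.inner_apply, RCLike.inner_apply, v, mul_comm] using this
    have hzcos : ∀ w : E, ∑ i, Real.cos ⟪w, x i⟫ * c i = 0 := by
      intro w
      have := (Submodule.mem_orthogonal _ _).mp hc (v (w, false))
        (Submodule.subset_span ⟨(w, false), rfl⟩)
      simpa [PiLp.inner_apply, RCLike.inner_apply, v, mul_comm] using this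
    -- characters
    let χ : Fin m → (Multiplicative E →* ℂ) := fun i =>
      { toFun := fun w => Complex.exp ((⟪Multiplicative.toAdd w, x i⟫ : ℝ) * Complex.I)
        map_one' := by simp
        map_mul' := by
          intro w w'
          simp only [toAdd_mul, inner_add_left, Complex.ofReal_add, add_mul, Complex.exp_add] }
    have hχinj : Function.Injective χ := by
      intro i j hij
      by_contra hne
      have hxij : x i ≠ x j := fun hh => hne (hx hh)
      set z := x i - x j with hz
      have hz0 : z ≠ 0 := sub_ne_zero.mpr hxij
      have hzz : (0:ℝ) < ⟪z, z⟫ := by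
        rw [real_inner_self_eq_norm_sq]
        exact pow_pos (norm_pos_iff.mpr hz0) 2
      set w : E := (Real.pi / ⟪z, z⟫) • z with hw
      have hdiff : ⟪w, x i⟫ - ⟪w, x j⟫ = Real.pi := by
        rw [← inner_sub_right, hw, real_inner_smul_left, ← hz,
          div_mul_cancel₀ _ (ne_of_gt hzz)]
      have heq : Complex.exp ((⟪w, x i⟫ : ℝ) * Complex.I)
          = Complex.exp ((⟪w, x j⟫ : ℝ) * Complex.I) := by
        have := congrArg (fun f : Multiplicative E →* ℂ => f (Multiplicative.ofAdd w)) hij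
        simpa [χ] using this
      have : Complex.exp (((⟪w, x i⟫ : ℝ) - (⟪w, x j⟫ : ℝ)) * Complex.I) = 1 := by
        rw [sub_mul, Complex.exp_sub, heq, div_self (Complex.exp_ne_zero _)]
      rw [show ((⟪w, x i⟫ : ℝ) - (⟪w, x j⟫ : ℝ) : ℂ) = ((⟪w, x i⟫ - ⟪w, x j⟫ : ℝ) : ℂ) by
        push_cast; ring, hdiff] at this
      rw [Complex.exp_pi_mul_I] at this
      norm_num at this
    have hli : LinearIndependent ℂ fun i => ((χ i : Multiplicative E →* ℂ) : Multiplicative E → ℂ) :=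
      (linearIndependent_monoidHom (Multiplicative E) ℂ).comp χ hχinj
    have hsum : ∑ i, ((c i : ℂ)) • ((χ i : Multiplicative E →* ℂ) : Multiplicative E → ℂ) = 0 := by
      funext w
      have hs := hzsin (Multiplicative.toAdd w)
      have hcθ := hzcos (Multiplicative.toAdd w)
      have : ∑ i, (c i : ℂ) * Complex.exp ((⟪Multiplicative.toAdd w, x i⟫ : ℝ) * Complex.I) = 0 := by
        have expand : ∀ i, (c i : ℂ) * Complex.exp ((⟪Multiplicative.toAdd w, x i⟫ : ℝ) * Complex.I)
            = ((Real.cos ⟪Multiplicative.toAdd w, x i⟫ * c i : ℝ) : ℂ)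
              + ((Real.sin ⟪Multiplicative.toAdd w, x i⟫ * c i : ℝ) : ℂ) * Complex.I := by
          intro i
          rw [Complex.exp_mul_I]
          push_cast [Complex.ofReal_cos, Complex.ofReal_sin]
          ring
        rw [Finset.sum_congr rfl fun i _ => expand i, Finset.sum_add_distrib,
          ← Finset.sum_mul, ← Complex.ofReal_sum, ← Complex.ofReal_sum, hs, hcθ]
        simp
      simpa [Finset.sum_apply, Pi.smul_apply, smul_eq_mul, χ] using this
    have hCzero := Fintype.linearIndependent_iff.mp hli (fun i => (c i : ℂ)) hsum
    apply hc0
    ext i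
    show c i = 0
    have h2 : (c i : ℂ) = 0 := hCzero i
    exact_mod_cast h2
  -- Step 2: express y as a finite combination.
  have hy : (WithLp.toLp 2 y : EuclideanSpace ℝ (Fin m)) ∈ Submodule.span ℝ (Set.range v) := by
    rw [hspan]; trivial
  rw [Finsupp.mem_span_range_iff_exists_finsupp] at hy
  obtain ⟨c, hc⟩ := hy
  set s := c.support with hs
  let e : s ≃ Fin s.card := s.equivFin
  refine ⟨s.card, fun j => ((e.symm j : s) : E × Bool).1,
    fun j => if ((e.symm j : s) : E × Bool).2 then c (e.symm j : s) else 0,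
    fun j => if ((e.symm j : s) : E × Bool).2 then 0 else c (e.symm j : s), fun i => ?_⟩
  have key : ∀ p : E × Bool,
      (if p.2 then c p else 0) * Real.sin ⟪p.1, x i⟫
        + (if p.2 then 0 else c p) * Real.cos ⟪p.1, x i⟫ = c p * v p i := by
    intro p
    rcases p with ⟨w, _ | _⟩ <;> simp [v]
  have hci := congrFun (congrArg (fun z : EuclideanSpace ℝ (Fin m) => (z : Fin m → ℝ)) hc) i
  have hsum2 : (c.sum fun p r => r • v p) i = ∑ p ∈ s, c p * v p i := by
    rw [Finsupp.sum]
    rw [show ((∑ p ∈ c.support, c p • v p : EuclideanSpace ℝ (Fin m)) i)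
        = ∑ p ∈ c.support, (c p • v p : EuclideanSpace ℝ (Fin m)) i from
      by rw [WithLp.ofLp_sum, Finset.sum_apply]]
    rfl
  calc ∑ j : Fin s.card,
        ((if ((e.symm j : s) : E × Bool).2 then c (e.symm j : s) else 0) * Real.sin ⟪((e.symm j : s) : E × Bool).1, x i⟫
          + (if ((e.symm j : s) : E × Bool).2 then 0 else c (e.symm j : s)) * Real.cos ⟪((e.symm j : s) : E × Bool).1, x i⟫)
      = ∑ j : Fin s.card, c ((e.symm j : s) : E × Bool) * v ((e.symm j : s) : E × Bool) i := by
        exact Finset.sum_congr rfl fun j _ => key _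
    _ = ∑ q : s, c (q : E × Bool) * v (q : E × Bool) i := e.symm.sum_comp (fun q : s => c (q : E × Bool) * v (q : E × Bool) i)
    _ = ∑ p ∈ s, c p * v p i := Finset.sum_coe_sort s (fun p => c p * v p i)
    _ = y i := by rw [← hsum2]; exact hci
end
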